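/- For every k ≥ 2 and every integer t with 2k - 3 ≤ t ≤ k(k-1)/2, there exists a set A ⊆ [0, 2^{k-2}] of k integers with |2ˆA| = t, where 2ˆA is the set of sums of two distinct elements of A. Hence the set of possible sizes of 2-fold restricted sumsets of k-element sets of integers is exactly [2k-3, k(k-1)/2]. -/

import Mathlib

open Pointwise Finset

/-- The `h`-fold sumset of a finite set `A`. -/
def hfold {G : Type*} [AddCommMonoid G] [DecidableEq G] : ℕ → Finset G → Finset G
  | 0, _ => {0}
  | n + 1, A => hfold n A + A

/-- The `h`-fold restricted sumset of a finite set `A`: sums of `h` distinct elements. -/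
def rfold {G : Type*} [AddCommMonoid G] [DecidableEq G] (h : ℕ) (A : Finset G) : Finset G :=
  (A.powersetCard h).image (fun S => S.sum id)

lemma mem_rfold2 {A : Finset ℤ} {c : ℤ} :
    c ∈ rfold 2 A ↔ ∃ a ∈ A, ∃ b ∈ A, a ≠ b ∧ a + b = c := by
  simp only [rfold, Finset.mem_image, Finset.mem_powersetCard]
  constructor
  · rintro ⟨S, ⟨hS, hcard⟩, rfl⟩
    obtain ⟨a, b, hab, rfl⟩ := Finset.card_eq_two.mp hcard
    exact ⟨a, hS (by simp), b, hS (by simp), hab, by simp [Finset.sum_pair hab]⟩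
  · rintro ⟨a, ha, b, hb, hab, rfl⟩
    refine ⟨{a, b}, ⟨?_, Finset.card_eq_two.mpr ⟨a, b, hab, rfl⟩⟩, by simp [Finset.sum_pair hab]⟩
    intro z hz
    simp only [Finset.mem_insert, Finset.mem_singleton] at hz
    rcases hz with rfl | rfl <;> assumption

lemma rfold2_card_le (A : Finset ℤ) : (rfold 2 A).card ≤ A.card * (A.card - 1) / 2 := by
  calc (rfold 2 A).card ≤ (A.powersetCard 2).card := Finset.card_image_le
  _ = A.card.choose 2 := Finset.card_powersetCard 2 A
  _ = A.card * (A.card - 1) / 2 := Nat.choose_two_right A.card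

lemma rfold2_card_ge (A : Finset ℤ) (h : 2 ≤ A.card) :
    2 * A.card - 3 ≤ (rfold 2 A).card := by
  have hne : A.Nonempty := Finset.card_pos.mp (by omega)
  set m := A.min' hne with hm
  set M := A.max' hne with hM
  have hmM : m < M := A.min'_lt_max'_of_card (by omega)
  have hmA : m ∈ A := A.min'_mem hne
  have hMA : M ∈ A := A.max'_mem hne
  set S1 : Finset ℤ := (A.erase m).image (fun b => m + b) with hS1
  set S2 : Finset ℤ := ((A.erase m).erase M).image (fun a => a + M) with hS2
  have hc1 : S1.card = A.card - 1 := by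
    rw [hS1, Finset.card_image_of_injective _ (add_right_injective m),
      Finset.card_erase_of_mem hmA]
  have hc2 : S2.card = A.card - 2 := by
    rw [hS2, Finset.card_image_of_injective _ (add_left_injective M),
      Finset.card_erase_of_mem (Finset.mem_erase.mpr ⟨hmM.ne', hMA⟩),
      Finset.card_erase_of_mem hmA]
    omega
  have hsub : S1 ∪ S2 ⊆ rfold 2 A := by
    intro c hc
    rcases Finset.mem_union.mp hc with hc | hc
    · obtain ⟨b, hb, rfl⟩ := Finset.mem_image.mp hc
      obtain ⟨hbm, hbA⟩ := Finset.mem_erase.mp hb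
      exact mem_rfold2.mpr ⟨m, hmA, b, hbA, fun e => hbm e.symm, rfl⟩
    · obtain ⟨a, ha, rfl⟩ := Finset.mem_image.mp hc
      obtain ⟨haM, ha'⟩ := Finset.mem_erase.mp ha
      exact mem_rfold2.mpr ⟨a, (Finset.mem_erase.mp ha').2, M, hMA, haM, rfl⟩
  have hdisj : Disjoint S1 S2 := by
    rw [Finset.disjoint_left]
    rintro c hc1' hc2'
    obtain ⟨b, hb, rfl⟩ := Finset.mem_image.mp hc1'
    obtain ⟨a, ha, hab⟩ := Finset.mem_image.mp hc2'
    obtain ⟨haM, ha'⟩ := Finset.mem_erase.mp ha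
    obtain ⟨ham, haA⟩ := Finset.mem_erase.mp ha'
    have h1 : b ≤ M := A.le_max' b (Finset.mem_erase.mp hb).2
    have h2 : m ≤ a := A.min'_le a haA
    have h3 : m < a := lt_of_le_of_ne h2 (Ne.symm ham)
    omega
  calc 2 * A.card - 3 = (A.card - 1) + (A.card - 2) := by omega
  _ = (S1 ∪ S2).card := by rw [Finset.card_union_of_disjoint hdisj, hc1, hc2]
  _ ≤ (rfold 2 A).card := Finset.card_le_card hsub

lemma two_mul_le_pow (k : ℕ) (hk : 3 ≤ k) : 2 * k - 4 ≤ 2 ^ (k - 2) := by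
  obtain ⟨m, rfl⟩ : ∃ m, k = m + 3 := ⟨k - 3, by omega⟩
  have h1 : m < 2 ^ m := Nat.lt_two_pow_self (n := m)
  have h2 : m + 3 - 2 = m + 1 := by omega
  rw [h2, pow_succ]
  omega

lemma construct_low (k t : ℕ) (hk : 3 ≤ k) (ht1 : 2 * k - 3 ≤ t) (ht2 : t ≤ 3 * k - 6) :
    ∃ A : Finset ℤ, A ⊆ Finset.Icc 0 (2 ^ (k - 2)) ∧ A.card = k ∧ (rfold 2 A).card = t := by
  set x : ℤ := (t : ℤ) - k + 2 with hxdef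
  have hx1 : (k : ℤ) - 1 ≤ x := by omega
  have hx2 : x ≤ 2 * (k : ℤ) - 4 := by omega
  set A : Finset ℤ := insert x (Finset.Icc (0 : ℤ) ((k : ℤ) - 2)) with hA
  have hxnot : x ∉ Finset.Icc (0 : ℤ) ((k : ℤ) - 2) := by
    simp only [Finset.mem_Icc]; omega
  refine ⟨A, ?_, ?_, ?_⟩
  · -- subset
    have hpow : (2 * (k : ℤ) - 4) ≤ 2 ^ (k - 2) := by
      have := two_mul_le_pow k hk
      have h2 : ((2 * k - 4 : ℕ) : ℤ) ≤ ((2 ^ (k - 2) : ℕ) : ℤ) := by exact_mod_cast this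
      push_cast at h2
      omega
    intro z hz
    simp only [hA, Finset.mem_insert, Finset.mem_Icc] at hz ⊢
    have hk2 : ((k : ℤ) - 2) ≤ 2 ^ (k - 2) := by omega
    rcases hz with rfl | hz <;> omega
  · -- card
    rw [hA, Finset.card_insert_of_notMem hxnot, Int.card_Icc]
    omega
  · -- rfold card
    have heq : rfold 2 A = Finset.Icc (1 : ℤ) (t : ℤ) := by
      ext c
      rw [mem_rfold2]
      simp only [hA, Finset.mem_insert, Finset.mem_Icc]
      constructor
      · rintro ⟨a, ha, b, hb, hab, rfl⟩
        rcases ha with rfl | ha <;> rcases hb with rfl | hb <;> omega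
      · intro hc
        by_cases h1 : c ≤ (k : ℤ) - 2
        · exact ⟨0, Or.inr ⟨le_refl 0, by omega⟩, c, Or.inr ⟨by omega, h1⟩, by omega, by omega⟩
        · by_cases h2 : c ≤ 2 * (k : ℤ) - 5
          · exact ⟨c - ((k : ℤ) - 2), Or.inr ⟨by omega, by omega⟩,
              (k : ℤ) - 2, Or.inr ⟨by omega, le_refl _⟩, by omega, by omega⟩
          · exact ⟨x, Or.inl rfl, c - x, Or.inr ⟨by omega, by omega⟩, by omega, by omega⟩
    rw [heq, Int.card_Icc]
    omega

lemma step_lemma (k t : ℕ) (hk : 2 ≤ k) (A : Finset ℤ)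
    (hA : A ⊆ Finset.Icc 0 (2 ^ (k - 2))) (hcard : A.card = k) (hr : (rfold 2 A).card = t) :
    ∃ B : Finset ℤ, B ⊆ Finset.Icc 0 (2 ^ (k - 1)) ∧ B.card = k + 1 ∧
      (rfold 2 B).card = t + k := by
  obtain ⟨m, rfl⟩ : ∃ m, k = m + 2 := ⟨k - 2, by omega⟩
  set N : ℤ := 2 ^ m with hN
  have hN1 : 1 ≤ N := by
    have : (0:ℤ) < 2 ^ m := by positivity
    omega
  have hmem : ∀ a ∈ A, 0 ≤ a ∧ a ≤ N := by
    intro a ha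
    have := hA ha
    simp only [Finset.mem_Icc] at this
    simpa [hN] using this
  have hnotin : (2 * N) ∉ A := by
    intro h
    have := hmem _ h
    omega
  set B : Finset ℤ := insert (2 * N) A with hB
  have heq : rfold 2 B = rfold 2 A ∪ A.image (fun a => 2 * N + a) := by
    ext c
    rw [Finset.mem_union, mem_rfold2, mem_rfold2]
    constructor
    · rintro ⟨a, ha, b, hb, hab, rfl⟩
      rw [hB, Finset.mem_insert] at ha hb
      rcases ha with rfl | ha <;> rcases hb with rfl | hb
      · omega
      · exact Or.inr (Finset.mem_image.mpr ⟨b, hb, rfl⟩)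
      · exact Or.inr (Finset.mem_image.mpr ⟨a, ha, by omega⟩)
      · exact Or.inl ⟨a, ha, b, hb, hab, rfl⟩
    · rintro (⟨a, ha, b, hb, hab, rfl⟩ | hc)
      · exact ⟨a, Finset.mem_insert_of_mem ha, b, Finset.mem_insert_of_mem hb, hab, rfl⟩
      · obtain ⟨a, ha, rfl⟩ := Finset.mem_image.mp hc
        have := hmem a ha
        exact ⟨2 * N, Finset.mem_insert_self _ _, a, Finset.mem_insert_of_mem ha,
          by omega, rfl⟩
  have hlt : ∀ c ∈ rfold 2 A, c < 2 * N := by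
    intro c hc
    obtain ⟨a, ha, b, hb, hab, rfl⟩ := mem_rfold2.mp hc
    have h1 := hmem a ha
    have h2 := hmem b hb
    omega
  have hdisj : Disjoint (rfold 2 A) (A.image (fun a => 2 * N + a)) := by
    rw [Finset.disjoint_left]
    rintro c hc1 hc2
    obtain ⟨a, ha, rfl⟩ := Finset.mem_image.mp hc2
    have := hmem a ha
    have := hlt _ hc1
    omega
  refine ⟨B, ?_, ?_, ?_⟩
  · intro z hz
    rw [hB, Finset.mem_insert] at hz
    simp only [Finset.mem_Icc]
    have hpow : (2 : ℤ) ^ (m + 2 - 1) = 2 * N := by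
      have : m + 2 - 1 = m + 1 := by omega
      rw [this, hN, pow_succ]; ring
    rcases hz with rfl | hz
    · constructor <;> omega
    · have := hmem z hz; omega
  · rw [hB, Finset.card_insert_of_notMem hnotin, hcard]
  · rw [heq, Finset.card_union_of_disjoint hdisj, hr,
      Finset.card_image_of_injective _ (add_right_injective (2 * N)), hcard]

lemma pascal2 (k : ℕ) : (k + 1) * k / 2 = k * (k - 1) / 2 + k := by
  have h1 : (k + 1).choose 2 = k.choose 1 + k.choose 2 := Nat.choose_succ_succ k 1
  rw [Nat.choose_two_right, Nat.choose_two_right, Nat.choose_one_right] at h1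
  simp only [Nat.add_sub_cancel] at h1
  omega

lemma exists_main (k : ℕ) (hk : 2 ≤ k) : ∀ t : ℕ, 2 * k - 3 ≤ t → t ≤ k * (k - 1) / 2 →
    ∃ A : Finset ℤ, A ⊆ Finset.Icc 0 (2 ^ (k - 2)) ∧ A.card = k ∧ (rfold 2 A).card = t := by
  induction k, hk using Nat.le_induction with
  | base =>
    intro t ht1 ht2
    have ht : t = 1 := by norm_num at ht1 ht2; omega
    subst ht
    refine ⟨{0, 1}, ?_, by decide, ?_⟩
    · intro z hz
      simp only [Finset.mem_insert, Finset.mem_singleton] at hz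
      simp only [Finset.mem_Icc]
      rcases hz with rfl | rfl <;> norm_num
    · have : rfold 2 ({0, 1} : Finset ℤ) = {1} := by
        ext c
        rw [mem_rfold2]
        simp only [Finset.mem_insert, Finset.mem_singleton]
        constructor
        · rintro ⟨a, ha, b, hb, hab, rfl⟩
          rcases ha with rfl | rfl <;> rcases hb with rfl | rfl <;> omega
        · rintro rfl
          exact ⟨0, Or.inl rfl, 1, Or.inr rfl, by omega, by omega⟩
      rw [this]; rfl
  | succ k hk ih =>
    intro t ht1 ht2
    have hkey : (k + 1) * k / 2 = k * (k - 1) / 2 + k := pascal2 k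
    by_cases hcase : t ≤ 3 * (k + 1) - 6
    · exact construct_low (k + 1) t (by omega) ht1 hcase
    · have h2 : k + 1 - 1 = k := by omega
      rw [h2] at ht2
      obtain ⟨A, h1, h2', h3⟩ := ih (t - k) (by omega) (by omega)
      obtain ⟨B, hB1, hB2, hB3⟩ := step_lemma k (t - k) hk A h1 h2' h3
      refine ⟨B, ?_, hB2, by rw [hB3]; omega⟩
      have : k + 1 - 2 = k - 1 := by omega
      rw [this]
      exact hB1

theorem stmt12 (k : ℕ) (hk : 2 ≤ k) :
    (∀ t : ℕ, 2 * k - 3 ≤ t → t ≤ k * (k - 1) / 2 →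
      ∃ A : Finset ℤ, A ⊆ Finset.Icc 0 (2 ^ (k - 2)) ∧ A.card = k ∧ (rfold 2 A).card = t) ∧
    {t : ℕ | ∃ A : Finset ℤ, A.card = k ∧ (rfold 2 A).card = t}
      = Set.Icc (2 * k - 3) (k * (k - 1) / 2) := by
  refine ⟨exists_main k hk, ?_⟩
  ext t
  simp only [Set.mem_setOf_eq, Set.mem_Icc]
  constructor
  · rintro ⟨A, hcard, hr⟩
    constructor
    · rw [← hcard, ← hr]; exact rfold2_card_ge A (hcard ▸ hk)
    · rw [← hcard, ← hr]; exact rfold2_card_le A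
  · rintro ⟨h1, h2⟩
    obtain ⟨A, _, hc, hr⟩ := exists_main k hk t h1 h2
    exact ⟨A, hc, hr⟩
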